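/- Let P : [0,2] → ℝ be continuously differentiable, satisfying P'(t) = P(t)²/((1-t)²) for t ∈ [0,1), P'(t) = P(t)² for t ∈ [1,2], and P(2) = 1. Then no such P exists. (I.e., the Riccati ODE P' = P²/((1-t)²·𝟙_{[0,1)}(t) + 𝟙_{[1,2]}(t)), P(2)=1 has no continuous solution on [0,2].) -/

import Mathlib

open Set Topology Filter

theorem stmt_0 :
    ¬ ∃ P P' : ℝ → ℝ,
      (∀ t ∈ Set.Icc (0:ℝ) 2, HasDerivWithinAt P (P' t) (Set.Icc (0:ℝ) 2) t) ∧
      ContinuousOn P' (Set.Icc (0:ℝ) 2) ∧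
      (∀ t ∈ Set.Ico (0:ℝ) 1, P' t = (P t)^2 / (1 - t)^2) ∧
      (∀ t ∈ Set.Icc (1:ℝ) 2, P' t = (P t)^2) ∧
      P 2 = 1 := by
  rintro ⟨P, P', hd, hc', h1, h2, hP2⟩
  have hPc : ContinuousOn P (Icc (0:ℝ) 2) := fun t ht => (hd t ht).continuousWithinAt
  -- On [1,2], wherever P stays positive up to 2, P u = (3-u)⁻¹
  have R : ∀ u ∈ Icc (1:ℝ) 2, (∀ s ∈ Icc u 2, 0 < P s) → (P u)⁻¹ = 3 - u := by
    intro u hu hpos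
    have hcont : ContinuousOn (fun t => (P t)⁻¹ + t) (Icc u 2) := by
      apply ContinuousOn.add
      · exact (hPc.mono (Icc_subset_Icc (by linarith [hu.1]) le_rfl)).inv₀
          fun s hs => (hpos s hs).ne'
      · exact continuousOn_id
    have hder : ∀ x ∈ Ico u 2, HasDerivWithinAt (fun t => (P t)⁻¹ + t) 0 (Ici x) x := by
      intro x hx
      have hx02 : x ∈ Icc (0:ℝ) 2 := ⟨by linarith [hu.1, hx.1], hx.2.le⟩
      have hxI : x ∈ Icc (1:ℝ) 2 := ⟨le_trans hu.1 hx.1, hx.2.le⟩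
      have hPx : P x ≠ 0 := (hpos x ⟨hx.1, hx.2.le⟩).ne'
      have hD : HasDerivWithinAt P (P' x) (Ici x) x :=
        (hd x hx02).mono_of_mem_nhdsWithin
          (Icc_mem_nhdsGE_of_mem ⟨by linarith [hxI.1], hx.2⟩)
      have := (hD.inv hPx).add (hasDerivWithinAt_id x (Ici x))
      refine this.congr_deriv ?_
      rw [h2 x hxI]
      field_simp
      norm_num
    have key := constant_of_has_deriv_right_zero hcont hder 2 (right_mem_Icc.mpr hu.2)
    simp only [hP2, inv_one] at key
    linarith [key]
  -- P > 0 on [1,2]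
  have hpos12 : ∀ t ∈ Icc (1:ℝ) 2, 0 < P t := by
    by_contra hcon
    push_neg at hcon
    obtain ⟨t0, ht0, ht0le⟩ := hcon
    set S := {t : ℝ | t ∈ Icc (1:ℝ) 2 ∧ P t ≤ 0} with hS
    have hne : S.Nonempty := ⟨t0, ht0, ht0le⟩
    have hbdd : BddAbove S := ⟨2, fun t ht => ht.1.2⟩
    have hclosed : IsClosed S := by
      have hSeq : S = Icc (1:ℝ) 2 ∩ P ⁻¹' Iic 0 := rfl
      rw [hSeq]
      exact (hPc.mono (Icc_subset_Icc (by norm_num) le_rfl)).preimage_isClosed_of_isClosed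
        isClosed_Icc isClosed_Iic
    have hts : sSup S ∈ S := hclosed.csSup_mem hne hbdd
    set τ := sSup S with hτ
    have hτ2 : τ < 2 := lt_of_le_of_ne hts.1.2 (fun h => by
      have h' := hts.2; rw [h, hP2] at h'; linarith)
    have hgt : ∀ u, τ < u → u ≤ 2 → 0 < P u := by
      intro u h1u h2u
      by_contra h
      push_neg at h
      exact absurd (le_csSup hbdd ⟨⟨le_trans hts.1.1 h1u.le, h2u⟩, h⟩) (not_le.mpr h1u)
    have hhalf : ∀ u, τ < u → u ≤ 2 → (1:ℝ)/2 ≤ P u := by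
      intro u h1u h2u
      have hu : u ∈ Icc (1:ℝ) 2 := ⟨le_trans hts.1.1 h1u.le, h2u⟩
      have hinv := R u hu (fun s hs => hgt s (lt_of_lt_of_le h1u hs.1) hs.2)
      have h3u : (0:ℝ) < 3 - u := by linarith [hu.2]
      have hPu : P u = (3 - u)⁻¹ := inv_eq_iff_eq_inv.mp hinv
      rw [hPu]
      have : (2:ℝ)⁻¹ ≤ (3 - u)⁻¹ := inv_anti₀ h3u (by linarith [hu.1])
      linarith
    have hlim : Filter.Tendsto P (𝓝[>] τ) (𝓝 (P τ)) := by
      have hcw : ContinuousWithinAt P (Icc 0 2) τ := hPc τ ⟨by linarith [hts.1.1], hts.1.2⟩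
      apply hcw.tendsto.mono_left
      apply nhdsWithin_le_of_mem
      have hI : Ioc τ 2 ∈ 𝓝[>] τ := Ioc_mem_nhdsGT_of_mem ⟨le_refl τ, hτ2⟩
      exact Filter.mem_of_superset hI (fun x hx => ⟨by linarith [hts.1.1, hx.1], hx.2⟩)
    have hev : ∀ᶠ u in 𝓝[>] τ, (1:ℝ)/2 ≤ P u := by
      have hI : Ioc τ 2 ∈ 𝓝[>] τ := Ioc_mem_nhdsGT_of_mem ⟨le_refl τ, hτ2⟩
      exact Filter.eventually_of_mem hI (fun u hu => hhalf u hu.1 hu.2)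
    have : (1:ℝ)/2 ≤ P τ := ge_of_tendsto hlim hev
    linarith [hts.2]
  have hP1 : 0 < P 1 := hpos12 1 (by norm_num)
  -- positivity of P just to the left of 1
  obtain ⟨t₁, ht₁0, ht₁1, hposL⟩ : ∃ t₁, 0 ≤ t₁ ∧ t₁ < 1 ∧ ∀ s ∈ Icc t₁ 1, 0 < P s := by
    have hcw : ContinuousWithinAt P (Icc (0:ℝ) 2) 1 := hPc 1 (by norm_num)
    have hmem : P ⁻¹' Ioi 0 ∈ 𝓝[Icc (0:ℝ) 2] 1 := hcw (Ioi_mem_nhds hP1)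
    rw [mem_nhdsWithin] at hmem
    obtain ⟨U, hUo, hU1, hUs⟩ := hmem
    obtain ⟨ε, hε, hball⟩ := Metric.isOpen_iff.mp hUo 1 hU1
    refine ⟨max 0 (1 - ε/2), le_max_left _ _, ?_, ?_⟩
    · exact max_lt (by norm_num) (by linarith)
    · intro s hs
      have hs0 : 0 ≤ s := le_trans (le_max_left _ _) hs.1
      have hs1 : 1 - ε/2 ≤ s := le_trans (le_max_right _ _) hs.1
      have hsU : s ∈ U := hball (by
        rw [Metric.mem_ball, Real.dist_eq, abs_lt]
        constructor <;> [linarith [hs.2]; linarith [hs.2]])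
      exact hUs ⟨hsU, hs0, by linarith [hs.2]⟩
  set C := (P t₁)⁻¹ + (1 - t₁)⁻¹ with hC
  have L : ∀ s, t₁ ≤ s → s < 1 → (P s)⁻¹ + (1 - s)⁻¹ = C := by
    intro s hts hs1
    have hcont : ContinuousOn (fun t => (P t)⁻¹ + (1 - t)⁻¹) (Icc t₁ s) := by
      apply ContinuousOn.add
      · apply ContinuousOn.inv₀
        · exact hPc.mono (fun x hx => ⟨le_trans ht₁0 hx.1, by linarith [hx.2]⟩)
        · exact fun x hx => (hposL x ⟨hx.1, by linarith [hx.2]⟩).ne'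
      · apply ContinuousOn.inv₀
        · exact continuousOn_const.sub continuousOn_id
        · intro x hx
          have := hx.2
          intro h
          linarith
    have hder : ∀ x ∈ Ico t₁ s,
        HasDerivWithinAt (fun t => (P t)⁻¹ + (1 - t)⁻¹) 0 (Ici x) x := by
      intro x hx
      have hx1 : x < 1 := lt_of_lt_of_le hx.2 hs1.le
      have hx0 : 0 ≤ x := le_trans ht₁0 hx.1
      have hPx : P x ≠ 0 := (hposL x ⟨hx.1, hx1.le⟩).ne'
      have h1x : (1:ℝ) - x ≠ 0 := by intro h; linarith
      have hD : HasDerivWithinAt P (P' x) (Ici x) x :=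
        (hd x ⟨hx0, by linarith⟩).mono_of_mem_nhdsWithin
          (Icc_mem_nhdsGE_of_mem ⟨hx0, by linarith⟩)
      have hD2 : HasDerivWithinAt (fun t : ℝ => (1 - t)⁻¹) (-(-1)/(1 - x)^2) (Ici x) x :=
        ((hasDerivWithinAt_id x (Ici x)).const_sub 1).inv h1x
      have := (hD.inv hPx).add hD2
      refine this.congr_deriv ?_
      rw [h1 x ⟨hx0, hx1⟩]
      field_simp
      ring
    exact constant_of_has_deriv_right_zero hcont hder s (right_mem_Icc.mpr hts)
  have hCpos : 0 < C := by
    have hp := hposL t₁ ⟨le_rfl, ht₁1.le⟩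
    have h1t : (0:ℝ) < 1 - t₁ := by linarith
    rw [hC]; positivity
  set B := max C 1 with hB
  have hB1 : (1:ℝ) ≤ B := le_max_right _ _
  have hBC : C ≤ B := le_max_left _ _
  have hBpos : (0:ℝ) < B := lt_of_lt_of_le one_pos hB1
  set s := max t₁ (1 - (2*B)⁻¹) with hs
  have hs1 : s < 1 := by
    apply max_lt ht₁1
    have : (0:ℝ) < (2*B)⁻¹ := by positivity
    linarith
  have hst : t₁ ≤ s := le_max_left _ _
  have h1s : 1 - s ≤ (2*B)⁻¹ := by
    have : 1 - (2*B)⁻¹ ≤ s := le_max_right _ _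
    linarith
  have h1spos : 0 < 1 - s := by linarith
  have hinv : 2*B ≤ (1 - s)⁻¹ := by
    calc 2*B = ((2*B)⁻¹)⁻¹ := by rw [inv_inv]
      _ ≤ (1 - s)⁻¹ := inv_anti₀ h1spos h1s
  have hPs : 0 < (P s)⁻¹ := inv_pos.mpr (hposL s ⟨hst, hs1.le⟩)
  have hLs := L s hst hs1
  have h2B : C + 1 ≤ 2*B := by linarith
  clear_value s B C
  linarith [hLs, hinv, hPs, h2B]
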